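/- Let G = (S, C, R) be a reaction network with a set of intermediate species Y ⊆ S (satisfying (I1) and (I2)), and let G* be the reduction of G by removal of Y. If G is conservative, then G* is conservative. Conversely, if G* is conservative and the zero complex 0 does not belong to C, then G is conservative. -/

import Mathlib

/-- A reaction network: a finite set of species, a finite set of complexes
(nonnegative vectors supported on the species), and a finite set of reactions
(a digraph on the complexes with no self-loops), such that every complex takes
part in some reaction and every species is part of some complex. -/
structure RN (ι : Type) where
  species : Finset ι
  complexes : Finset (ι → ℝ)
  reactions : Finset ((ι → ℝ) × (ι → ℝ))
  complexes_nonneg : ∀ y ∈ complexes, ∀ i, 0 ≤ y i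
  complexes_supp : ∀ y ∈ complexes, ∀ i, y i ≠ 0 → i ∈ species
  react_mem_fst : ∀ r ∈ reactions, r.1 ∈ complexes
  react_mem_snd : ∀ r ∈ reactions, r.2 ∈ complexes
  no_loops : ∀ r ∈ reactions, r.1 ≠ r.2
  complexes_used : ∀ y ∈ complexes, ∃ r ∈ reactions, r.1 = y ∨ r.2 = y
  species_used : ∀ i ∈ species, ∃ y ∈ complexes, y i ≠ 0

namespace RN

variable {ι : Type}

/-- A siphon: a nonempty set of species such that every reaction having a
product species in it also has a reactant species in it. -/
def IsSiphon (G : RN ι) (T : Set ι) : Prop :=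
  T.Nonempty ∧ T ⊆ ↑G.species ∧
    ∀ r ∈ G.reactions, (∃ i ∈ T, 0 < r.2 i) → ∃ i ∈ T, 0 < r.1 i

/-- A minimal siphon: a siphon not properly containing any other siphon. -/
def MinimalSiphon (G : RN ι) (T : Set ι) : Prop :=
  G.IsSiphon T ∧ ∀ T' : Set ι, G.IsSiphon T' → T' ⊆ T → T' = T

/-- A nonempty set of species is drainable if some finite sequence of reactions
(with repetitions allowed) strictly decreases every one of its coordinates. -/
def Drainable (G : RN ι) (T : Set ι) : Prop :=
  T.Nonempty ∧ T ⊆ ↑G.species ∧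
    ∃ L : List ((ι → ℝ) × (ι → ℝ)), (∀ r ∈ L, r ∈ G.reactions) ∧
      ∀ i ∈ T, (L.map (fun r => r.2 i - r.1 i)).sum < 0

/-- A nonempty set of species is self-replicable if some finite sequence of
reactions (with repetitions allowed) strictly increases every one of its
coordinates. -/
def SelfReplicable (G : RN ι) (T : Set ι) : Prop :=
  T.Nonempty ∧ T ⊆ ↑G.species ∧
    ∃ L : List ((ι → ℝ) × (ι → ℝ)), (∀ r ∈ L, r ∈ G.reactions) ∧
      ∀ i ∈ T, 0 < (L.map (fun r => r.2 i - r.1 i)).sum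

/-- A P-semiflow: a nonzero nonnegative vector supported on the species with
ωᵀN = 0, i.e. ω · (y' - y) = 0 for every reaction y → y'. -/
def IsPSemiflow (G : RN ι) (ω : ι → ℝ) : Prop :=
  (∀ i, 0 ≤ ω i) ∧ (∀ i, ω i ≠ 0 → i ∈ G.species) ∧ ω ≠ 0 ∧
    ∀ r ∈ G.reactions, ∑ i ∈ G.species, ω i * (r.2 i - r.1 i) = 0

/-- The siphon/P-semiflow property: every siphon contains the support of a
P-semiflow. -/
def SiphonPSemiflowProperty (G : RN ι) : Prop :=
  ∀ T : Set ι, G.IsSiphon T → ∃ ω : ι → ℝ, G.IsPSemiflow ω ∧ {i | 0 < ω i} ⊆ T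

/-- Consistency: there is a strictly positive T-semiflow, i.e. strictly
positive reaction weights v with N v = 0. -/
def Consistent (G : RN ι) : Prop :=
  ∃ v : ((ι → ℝ) × (ι → ℝ)) → ℝ, (∀ r ∈ G.reactions, 0 < v r) ∧
    ∀ i : ι, ∑ r ∈ G.reactions, v r * (r.2 i - r.1 i) = 0

/-- Conservativity: there is a strictly positive conservation law ω ≫ 0 with
ωᵀN = 0. -/
def Conservative (G : RN ι) : Prop :=
  ∃ ω : ι → ℝ, (∀ i ∈ G.species, 0 < ω i) ∧
    ∀ r ∈ G.reactions, ∑ i ∈ G.species, ω i * (r.2 i - r.1 i) = 0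

/-- A directed reaction path from `y` to `y'` all of whose non-endpoint
complexes lie in the set `A`. -/
def PathThrough (G : RN ι) (A : Set (ι → ℝ)) (y y' : ι → ℝ) : Prop :=
  ∃ L : List (ι → ℝ), (∀ z ∈ L, z ∈ A) ∧
    List.Chain (fun a b => (a, b) ∈ G.reactions) y (L ++ [y'])

end RN

variable {ι : Type}

/-- The complex consisting of the single species `j` (with unit coefficient),
for `j` in the given set. -/
def InterCplx [DecidableEq ι] (Y : Finset ι) (z : ι → ℝ) : Prop :=
  ∃ j ∈ Y, z = Pi.single j 1

/-- The complex `z` is supported off the set `Y`. -/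
def OffSet (Y : Finset ι) (z : ι → ℝ) : Prop := ∀ j ∈ Y, z j = 0

namespace RN

/-- `Y` is a set of intermediate species of `G`: (I1) every complex is either
supported off `Y` or equals a single species of `Y` with unit coefficient;
(I2) every `Y`-complex is connected to non-intermediate complexes by directed
reaction paths, in both directions, all of whose non-endpoints are
intermediates. -/
def IsIntermediateSet [DecidableEq ι] (G : RN ι) (Y : Finset ι) : Prop :=
  Y.Nonempty ∧ Y ⊆ G.species ∧
    (∀ y ∈ G.complexes, OffSet Y y ∨ InterCplx Y y) ∧
    (∀ j ∈ Y, ∃ y ∈ G.complexes, ∃ y' ∈ G.complexes, OffSet Y y ∧ OffSet Y y' ∧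
      G.PathThrough {z | InterCplx Y z} y (Pi.single j 1) ∧
      G.PathThrough {z | InterCplx Y z} (Pi.single j 1) y')

/-- `G'` is the reduction of `G` by removal of the set of intermediates `Y`:
its reactions are exactly the pairs `y → y'` of distinct non-intermediate
complexes of `G` joined by a directed reaction path all of whose non-endpoints
are intermediates (in particular all reactions of `G` between non-intermediate
complexes). -/
def IsIntermediateReduction [DecidableEq ι] (G : RN ι) (Y : Finset ι) (G' : RN ι) : Prop :=
  ∀ p : (ι → ℝ) × (ι → ℝ), p ∈ G'.reactions ↔
    (p.1 ∈ G.complexes ∧ p.2 ∈ G.complexes ∧ OffSet Y p.1 ∧ OffSet Y p.2 ∧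
      p.1 ≠ p.2 ∧ G.PathThrough {z | InterCplx Y z} p.1 p.2)

end RN

/-- The projection of a complex onto the coordinates outside `E` (the
coordinates in `E` are set to zero). -/
def projOff [DecidableEq ι] (E : Finset ι) (y : ι → ℝ) : ι → ℝ :=
  fun i => if i ∈ E then 0 else y i

namespace RN

/-- `E` is a set of catalysts of `G`, with `GE` the subnetwork of `G` implied
by `E`: (C1) every reaction either leaves the `E`-coordinates untouched or is
supported entirely in `E`; `GE` consists of the reactions of `G` involving
only species of `E`; and (C2) `GE` has no drainable and no self-replicable
siphons. -/
def IsCatalystSet (G GE : RN ι) (E : Finset ι) : Prop :=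
  E.Nonempty ∧ E ⊆ G.species ∧
    (∀ r ∈ G.reactions, (∀ i ∈ E, r.1 i = r.2 i) ∨ (∀ i, i ∉ E → r.1 i = 0 ∧ r.2 i = 0)) ∧
    (∀ p : (ι → ℝ) × (ι → ℝ), p ∈ GE.reactions ↔
      (p ∈ G.reactions ∧ (∀ i, p.1 i ≠ 0 → i ∈ E) ∧ (∀ i, p.2 i ≠ 0 → i ∈ E))) ∧
    (∀ T : Set ι, GE.IsSiphon T → ¬ GE.Drainable T ∧ ¬ GE.SelfReplicable T)

/-- `G'` is the reduction of `G` by removal of the set of catalysts `E`: its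
reactions are the projections off `E` of those reactions of `G` at least one
of whose projected sides is nonzero. -/
def IsCatalystReduction [DecidableEq ι] (G : RN ι) (E : Finset ι) (G' : RN ι) : Prop :=
  ∀ p : (ι → ℝ) × (ι → ℝ), p ∈ G'.reactions ↔
    ∃ r ∈ G.reactions, p = (projOff E r.1, projOff E r.2) ∧
      (projOff E r.1 ≠ 0 ∨ projOff E r.2 ≠ 0)

/-- A monomolecular network: every complex is either zero or a single species
with unit coefficient. -/
def Monomolecular [DecidableEq ι] (G : RN ι) : Prop :=
  ∀ y ∈ G.complexes, y = 0 ∨ ∃ i ∈ G.species, y = Pi.single i 1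

end RN

/-- Theorem 1(iv): if `G'` is obtained from `G` by removal of a set of
intermediates `Y`, then conservativity of `G` implies conservativity of `G'`;
conversely, if `G'` is conservative and the zero complex does not belong to
the complexes of `G`, then `G` is conservative. -/
private lemma chain_F_eq {α : Type} {R : α → α → Prop} {F : α → ℝ}
    (hF : ∀ a b, R a b → F a = F b) :
    ∀ (L : List α) (y y' : α), List.Chain R y (L ++ [y']) → F y = F y' := by
  intro L
  induction L with
  | nil =>
      intro y y' h
      exact hF y y' (by simpa [List.Chain] using h)
  | cons a L ih =>
      intro y y' h
      simp only [List.Chain] at h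
      rw [List.cons_append, List.isChain_cons_cons] at h
      exact (hF y a h.1).trans (ih a y' h.2)

private lemma edge_path {ι : Type} (G : RN ι) {A : Set (ι → ℝ)} {a b : ι → ℝ}
    (hr : (a, b) ∈ G.reactions) : G.PathThrough A a b :=
  by
  refine ⟨[], fun z hz => absurd hz List.not_mem_nil, ?_⟩
  simp only [List.nil_append]
  exact List.Chain.cons hr List.Chain.nil

private lemma path_comp {ι : Type} (G : RN ι) {A : Set (ι → ℝ)} {y m y'' : ι → ℝ}
    (hm : m ∈ A) (h1 : G.PathThrough A y m) (h2 : G.PathThrough A m y'') :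
    G.PathThrough A y y'' := by
  obtain ⟨L1, hL1, hc1⟩ := h1
  obtain ⟨L2, hL2, hc2⟩ := h2
  refine ⟨L1 ++ m :: L2, ?_, ?_⟩
  · intro z hz
    rcases List.mem_append.mp hz with h | h
    · exact hL1 z h
    · rcases List.mem_cons.mp h with rfl | h
      · exact hm
      · exact hL2 z h
  · have heq : (L1 ++ m :: L2) ++ [y''] = L1 ++ m :: (L2 ++ [y'']) := by
      simp
    rw [heq]
    exact List.isChain_cons_split.mpr ⟨hc1, hc2⟩

theorem conservative_removal_of_intermediates
    {ι : Type} [DecidableEq ι] (G G' : RN ι) (Y : Finset ι)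
    (hY : G.IsIntermediateSet Y) (hred : G.IsIntermediateReduction Y G') :
    (G.Conservative → G'.Conservative) ∧
    (G'.Conservative → (0 : ι → ℝ) ∉ G.complexes → G.Conservative) := by
  obtain ⟨hYne, hYsub, hI1, hI2⟩ := hY
  have hGC : ∀ y ∈ G'.complexes, y ∈ G.complexes ∧ OffSet Y y := by
    intro y hy
    obtain ⟨r, hr, h⟩ := G'.complexes_used y hy
    obtain ⟨h1, h2, h3, h4, -, -⟩ := (hred r).mp hr
    rcases h with h | h
    · subst h; exact ⟨h1, h3⟩
    · subst h; exact ⟨h2, h4⟩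
  have hGS : ∀ i ∈ G'.species, i ∈ G.species ∧ i ∉ Y := by
    intro i hi
    obtain ⟨y, hy, hyi⟩ := G'.species_used i hi
    obtain ⟨hyG, hyoff⟩ := hGC y hy
    exact ⟨G.complexes_supp y hyG i hyi, fun hiY => hyi (hyoff i hiY)⟩
  constructor
  · rintro ⟨ω, hpos, hbal⟩
    refine ⟨ω, fun i hi => hpos i (hGS i hi).1, ?_⟩
    intro r hr
    obtain ⟨h1, h2, h3, h4, hne, L, hLmem, hchain⟩ := (hred r).mp hr
    have hedge : ∀ a b : ι → ℝ, (a, b) ∈ G.reactions →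
        (∑ i ∈ G.species, ω i * a i) = ∑ i ∈ G.species, ω i * b i := by
      intro a b hab
      have hb := hbal (a, b) hab
      simp only [mul_sub] at hb
      rw [Finset.sum_sub_distrib] at hb
      linarith
    have hF : (∑ i ∈ G.species, ω i * r.1 i) = ∑ i ∈ G.species, ω i * r.2 i :=
      chain_F_eq (F := fun y => ∑ i ∈ G.species, ω i * y i) hedge L r.1 r.2 hchain
    have hsub : ∑ i ∈ G'.species, ω i * (r.2 i - r.1 i)
        = ∑ i ∈ G.species, ω i * (r.2 i - r.1 i) := by
      refine Finset.sum_subset (fun i hi => (hGS i hi).1) ?_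
      intro i hi hni
      have e1 : r.1 i = 0 := by
        by_contra h
        exact hni (G'.complexes_supp r.1 (G'.react_mem_fst r hr) i h)
      have e2 : r.2 i = 0 := by
        by_contra h
        exact hni (G'.complexes_supp r.2 (G'.react_mem_snd r hr) i h)
      rw [e1, e2]; ring
    rw [hsub]
    simp only [mul_sub]
    rw [Finset.sum_sub_distrib, ← hF, sub_self]
  · rintro ⟨ω', hpos', hbal'⟩ h0
    choose yin hyin yout hyout hoff1 hoff2 hpin hpout using hI2
    set ω0 : ι → ℝ := fun i => if i ∈ G'.species then ω' i else 1 with hω0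
    set V : (ι → ℝ) → ℝ := fun y => ∑ i ∈ G.species \ Y, ω0 i * y i with hV
    have hVz : ∀ z : ι → ℝ, V z = ∑ i ∈ G.species \ Y, ω0 i * z i := fun z => rfl
    have hω0pos : ∀ i, 0 < ω0 i := by
      intro i
      by_cases h : i ∈ G'.species
      · simpa [hω0, h] using hpos' i h
      · simp [hω0, h]
    have lemA : ∀ y y' : ι → ℝ, (y, y') ∈ G'.reactions → V y = V y' := by
      intro y y' hr
      have hb := hbal' (y, y') hr
      have hy1 : y ∈ G'.complexes := G'.react_mem_fst _ hr
      have hy2 : y' ∈ G'.complexes := G'.react_mem_snd _ hr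
      have e0 : ∑ i ∈ G'.species, ω0 i * (y' i - y i)
          = ∑ i ∈ G.species \ Y, ω0 i * (y' i - y i) := by
        refine Finset.sum_subset (fun i hi => Finset.mem_sdiff.mpr (hGS i hi)) ?_
        intro i hi hni
        have e1 : y i = 0 := by
          by_contra h; exact hni (G'.complexes_supp y hy1 i h)
        have e2 : y' i = 0 := by
          by_contra h; exact hni (G'.complexes_supp y' hy2 i h)
        rw [e1, e2]; ring
      have e0' : ∑ i ∈ G'.species, ω0 i * (y' i - y i)
          = ∑ i ∈ G'.species, ω' i * (y' i - y i) :=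
        Finset.sum_congr rfl fun i hi => by simp [hω0, hi]
      have key : ∑ i ∈ G.species \ Y, ω0 i * (y' i - y i) = 0 := by
        rw [← e0, e0', hb]
      simp only [mul_sub] at key
      rw [Finset.sum_sub_distrib] at key
      rw [hVz y, hVz y']
      linarith
    have hsingle : ∀ j ∈ Y, Pi.single j (1 : ℝ) ∈ {z : ι → ℝ | InterCplx Y z} :=
      fun j hj => ⟨j, hj, rfl⟩
    set c : ι → ℝ := fun j => if h : j ∈ Y then V (yout j h) else 1 with hc
    have hcj : ∀ (j : ι) (hj : j ∈ Y), c j = V (yout j hj) := fun j hj => dif_pos hj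
    have key1 : ∀ (j : ι) (hj : j ∈ Y), ∀ y, y ∈ G.complexes → OffSet Y y →
        G.PathThrough {z | InterCplx Y z} y (Pi.single j 1) → V y = c j := by
      intro j hj y hy hyoff hp
      have hcomp : G.PathThrough {z | InterCplx Y z} y (yout j hj) :=
        path_comp G (hsingle j hj) hp (hpout j hj)
      rw [hcj j hj]
      by_cases hne : y = yout j hj
      · rw [hne]
      · exact lemA y (yout j hj)
          ((hred (y, yout j hj)).mpr ⟨hy, hyout j hj, hyoff, hoff2 j hj, hne, hcomp⟩)
    have key2 : ∀ (j : ι) (hj : j ∈ Y), ∀ b, b ∈ G.complexes → OffSet Y b →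
        G.PathThrough {z | InterCplx Y z} (Pi.single j 1) b → c j = V b := by
      intro j hj b hb hboff hp
      have hyinpath : G.PathThrough {z | InterCplx Y z} (yin j hj) b :=
        path_comp G (hsingle j hj) (hpin j hj) hp
      have h1 : V (yin j hj) = c j := key1 j hj (yin j hj) (hyin j hj) (hoff1 j hj) (hpin j hj)
      have h2 : V (yin j hj) = V b := by
        by_cases hne : yin j hj = b
        · rw [hne]
        · exact lemA _ _
            ((hred (yin j hj, b)).mpr ⟨hyin j hj, hb, hoff1 j hj, hboff, hne, hyinpath⟩)
      rw [← h1, h2]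
    have hcpos : ∀ j ∈ Y, 0 < c j := by
      intro j hj
      have hyc := hyout j hj
      have hne0 : yout j hj ≠ 0 := fun h => h0 (h ▸ hyc)
      obtain ⟨k, hk⟩ := Function.ne_iff.mp hne0
      have hk' : yout j hj k ≠ 0 := by simpa using hk
      have hkS : k ∈ G.species := G.complexes_supp _ hyc k hk'
      have hkY : k ∉ Y := fun h => hk' (hoff2 j hj k h)
      have hkpos : 0 < yout j hj k :=
        lt_of_le_of_ne (G.complexes_nonneg _ hyc k) (Ne.symm hk')
      rw [hcj j hj, hVz]
      apply Finset.sum_pos'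
      · intro i hi
        exact mul_nonneg (hω0pos i).le (G.complexes_nonneg _ hyc i)
      · exact ⟨k, Finset.mem_sdiff.mpr ⟨hkS, hkY⟩, mul_pos (hω0pos k) hkpos⟩
    refine ⟨fun i => if i ∈ Y then c i else ω0 i, ?_, ?_⟩
    · intro i hi
      by_cases h : i ∈ Y
      · simpa [h] using hcpos i h
      · simpa [h] using hω0pos i
    · intro r hr
      have hr1 := G.react_mem_fst r hr
      have hr2 := G.react_mem_snd r hr
      have hr' : (r.1, r.2) ∈ G.reactions := by rwa [Prod.mk.eta]
      have hsplit : ∀ z : ι → ℝ,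
          (∑ i ∈ G.species, (if i ∈ Y then c i else ω0 i) * z i)
          = (∑ i ∈ Y, c i * z i) + V z := by
        intro z
        rw [← Finset.sum_sdiff hYsub]
        have e1 : ∑ i ∈ G.species \ Y, (if i ∈ Y then c i else ω0 i) * z i
            = ∑ i ∈ G.species \ Y, ω0 i * z i :=
          Finset.sum_congr rfl fun i hi => by rw [if_neg (Finset.mem_sdiff.mp hi).2]
        have e2 : ∑ i ∈ Y, (if i ∈ Y then c i else ω0 i) * z i
            = ∑ i ∈ Y, c i * z i :=
          Finset.sum_congr rfl fun i hi => by rw [if_pos hi]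
        rw [e1, e2, hVz z]
        ring
      have hW1 : ∀ z, z ∈ G.complexes → OffSet Y z → (∑ i ∈ Y, c i * z i) = 0 := by
        intro z hz hzoff
        exact Finset.sum_eq_zero fun i hi => by rw [hzoff i hi, mul_zero]
      have hWs : ∀ j ∈ Y, (∑ i ∈ Y, c i * (Pi.single j 1 : ι → ℝ) i) = c j := by
        intro j hj
        rw [Finset.sum_eq_single j]
        · simp
        · intro b hb hne
          simp [Pi.single_apply, hne]
        · intro h; exact absurd hj h
      have hVs : ∀ j ∈ Y, V (Pi.single j (1 : ℝ)) = 0 := by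
        intro j hj
        rw [hVz]
        refine Finset.sum_eq_zero fun i hi => ?_
        have hij : i ≠ j := fun h => (Finset.mem_sdiff.mp hi).2 (h ▸ hj)
        simp [Pi.single_apply, hij]
      show (∑ i ∈ G.species, (if i ∈ Y then c i else ω0 i) * (r.2 i - r.1 i)) = 0
      simp only [mul_sub]
      rw [Finset.sum_sub_distrib, hsplit r.2, hsplit r.1]
      rcases hI1 r.1 hr1 with ha | ⟨j, hj, haj⟩ <;> rcases hI1 r.2 hr2 with hb | ⟨k, hk, hbk⟩
      · have hrr : (r.1, r.2) ∈ G'.reactions :=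
          (hred (r.1, r.2)).mpr ⟨hr1, hr2, ha, hb, G.no_loops r hr, edge_path G hr'⟩
        have := lemA r.1 r.2 hrr
        linarith [hW1 r.1 hr1 ha, hW1 r.2 hr2 hb]
      · have hpath : G.PathThrough {z | InterCplx Y z} r.1 (Pi.single k 1) :=
          edge_path G (by rw [← hbk]; exact hr')
        have h1 : V r.1 = c k := key1 k hk r.1 hr1 ha hpath
        rw [hbk]
        linarith [hW1 r.1 hr1 ha, hWs k hk, hVs k hk]
      · have hpath : G.PathThrough {z | InterCplx Y z} (Pi.single j 1) r.2 :=
          edge_path G (by rw [← haj]; exact hr')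
        have h1 : c j = V r.2 := key2 j hj r.2 hr2 hb hpath
        rw [haj]
        linarith [hW1 r.2 hr2 hb, hWs j hj, hVs j hj]
      · have hpath : G.PathThrough {z | InterCplx Y z} (Pi.single j 1) (Pi.single k 1) :=
          edge_path G (by rw [← haj, ← hbk]; exact hr')
        have hp2 : G.PathThrough {z | InterCplx Y z} (yin j hj) (Pi.single k 1) :=
          path_comp G (hsingle j hj) (hpin j hj) hpath
        have h1 : V (yin j hj) = c j := key1 j hj _ (hyin j hj) (hoff1 j hj) (hpin j hj)
        have h2 : V (yin j hj) = c k := key1 k hk _ (hyin j hj) (hoff1 j hj) hp2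
        rw [haj, hbk]
        linarith [hWs j hj, hWs k hk, hVs j hj, hVs k hk]
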